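/- (Hoeffding's inequality for supermartingales) Let {X_n}_{n≥1} be a supermartingale with respect to a filtration {F_n} with X_1 constant, and let {[a_n,b_n]} be intervals of positive length such that X_{n+1} − X_n ∈ [a_{n+1}, b_{n+1}] almost surely for all n. Then for every n ≥ 1 and every λ > 0, P(X_n − X_1 ≥ λ) ≤ exp(−2λ² / ∑_{k=2}^{n} (b_k − a_k)²). -/

import Mathlib

open MeasureTheory
open scoped ENNReal

open Real ProbabilityTheory

lemma aux_phi (p : ℝ) (hp0 : 0 ≤ p) (hp1 : p ≤ 1) (u : ℝ) (hu : 0 ≤ u) :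
    -(p * u) + Real.log (1 - p + p * Real.exp u) ≤ u ^ 2 / 8 := by
  set g : ℝ → ℝ := fun v => 1 - p + p * Real.exp v with hgdef
  have hg : ∀ v, 0 < g v := by
    intro v
    show 0 < 1 - p + p * Real.exp v
    rcases eq_or_lt_of_le hp0 with h | h
    · simp [← h]
    · nlinarith [mul_pos h (Real.exp_pos v), Real.exp_pos v]
  have hg' : ∀ v, HasDerivAt g (p * Real.exp v) v := by
    intro v
    exact ((Real.hasDerivAt_exp v).const_mul p).const_add (1 - p)
  set φ : ℝ → ℝ := fun v => -(p * v) + Real.log (g v) with hphidef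
  set φ1 : ℝ → ℝ := fun v => -p + p * Real.exp v / g v with hphi1def
  have hφ : ∀ v, HasDerivAt φ (φ1 v) v := by
    intro v
    have h1 : HasDerivAt (fun w => -(p * w)) (-p) v := by
      exact (((hasDerivAt_id v).const_mul p).neg).congr_deriv (by ring)
    exact h1.add ((hg' v).log (hg v).ne')
  have hφ1 : ∀ v, HasDerivAt φ1 (p * Real.exp v * (1 - p) / (g v) ^ 2) v := by
    intro v
    have h2 : HasDerivAt (fun w => p * Real.exp w / g w)
        ((p * Real.exp v * g v - p * Real.exp v * (p * Real.exp v)) / (g v) ^ 2) v :=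
      ((Real.hasDerivAt_exp v).const_mul p).div (hg' v) (hg v).ne'
    have : (p * Real.exp v * g v - p * Real.exp v * (p * Real.exp v)) / (g v) ^ 2
        = p * Real.exp v * (1 - p) / (g v) ^ 2 := by
      simp only [hgdef]; ring
    rw [this] at h2
    exact h2.const_add (-p)
  set ψ1 : ℝ → ℝ := fun v => v / 4 - φ1 v with hψ1def
  have hψ1 : ∀ v, HasDerivAt ψ1 (1 / 4 - p * Real.exp v * (1 - p) / (g v) ^ 2) v := by
    intro v
    exact ((hasDerivAt_id v).div_const 4).sub (hφ1 v)
  have hψ1nonneg : ∀ v, 0 ≤ 1 / 4 - p * Real.exp v * (1 - p) / (g v) ^ 2 := by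
    intro v
    rw [sub_nonneg, div_le_iff₀ (pow_pos (hg v) 2)]
    nlinarith [sq_nonneg ((1 - p) - p * Real.exp v), Real.exp_pos v, hg v]
  have hψ1mono : Monotone ψ1 := by
    apply monotone_of_deriv_nonneg (fun v => (hψ1 v).differentiableAt)
    intro v; rw [(hψ1 v).deriv]; exact hψ1nonneg v
  have hψ1zero : ψ1 0 = 0 := by
    simp [hψ1def, hphi1def, hgdef]
  set ψ : ℝ → ℝ := fun v => v ^ 2 / 8 - φ v with hψdef
  have hψ : ∀ v, HasDerivAt ψ (ψ1 v) v := by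
    intro v
    have h3 : HasDerivAt (fun w : ℝ => w ^ 2 / 8) (v / 4) v := by
      have := (hasDerivAt_pow 2 v).div_const 8
      simpa using this.congr_deriv (by ring)
    exact h3.sub (hφ v)
  have hψmono : MonotoneOn ψ (Set.Ici 0) := by
    apply monotoneOn_of_deriv_nonneg (convex_Ici 0)
      (Continuous.continuousOn (continuous_iff_continuousAt.2
        (fun v => (hψ v).differentiableAt.continuousAt)))
      (fun v _ => (hψ v).differentiableAt.differentiableWithinAt)
    intro v hv
    rw [(hψ v).deriv, ← hψ1zero]
    exact hψ1mono (le_of_lt (by simpa using hv))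
  have hψ0 : ψ 0 = 0 := by simp [hψdef, hphidef, hgdef]
  have := hψmono (Set.self_mem_Ici) (Set.mem_Ici.2 hu) hu
  rw [hψ0] at this
  simpa [hψdef, hphidef, sub_nonneg] using this

lemma chord_bound {a b t x : ℝ} (hab : a < b) (hx1 : a ≤ x) (hx2 : x ≤ b) :
    Real.exp (t * x) ≤ ((b - x) * Real.exp (t * a) + (x - a) * Real.exp (t * b)) / (b - a) := by
  have hba : (0:ℝ) < b - a := by linarith
  have h := convexOn_exp.2 (Set.mem_univ (t * a)) (Set.mem_univ (t * b))
    (show (0:ℝ) ≤ (b - x) / (b - a) from div_nonneg (by linarith) hba.le)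
    (show (0:ℝ) ≤ (x - a) / (b - a) from div_nonneg (by linarith) hba.le) (by field_simp; ring)
  have harg : (b - x) / (b - a) * (t * a) + (x - a) / (b - a) * (t * b) = t * x := by
    field_simp; ring
  simp only [smul_eq_mul] at h
  rw [harg] at h
  calc Real.exp (t * x) ≤ (b - x) / (b - a) * Real.exp (t * a)
        + (x - a) / (b - a) * Real.exp (t * b) := by
        simpa [smul_eq_mul] using h
    _ = ((b - x) * Real.exp (t * a) + (x - a) * Real.exp (t * b)) / (b - a) := by ring

lemma hoeff_scalar {a b t m : ℝ} (hab : a < b) (ht : 0 ≤ t) (hm : m ≤ 0)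
    (ham : a ≤ m) (hmb : m ≤ b) :
    ((b - m) * Real.exp (t * a) + (m - a) * Real.exp (t * b)) / (b - a)
      ≤ Real.exp (t ^ 2 * (b - a) ^ 2 / 8) := by
  have hba : (0:ℝ) < b - a := by linarith
  have hee : Real.exp (t * a) ≤ Real.exp (t * b) :=
    Real.exp_le_exp.2 (by nlinarith)
  have hmono : ∀ m₁ m₂ : ℝ, m₁ ≤ m₂ →
      ((b - m₁) * Real.exp (t * a) + (m₁ - a) * Real.exp (t * b)) / (b - a)
        ≤ ((b - m₂) * Real.exp (t * a) + (m₂ - a) * Real.exp (t * b)) / (b - a) := by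
    intro m₁ m₂ h12
    rw [div_le_div_iff₀ hba hba]
    nlinarith [mul_nonneg (mul_nonneg (sub_nonneg.2 h12) (sub_nonneg.2 hee)) hba.le]
  rcases lt_or_ge b 0 with hb | hb
  · -- b < 0 : bound by f(b) = exp (t*b) ≤ 1
    calc ((b - m) * Real.exp (t * a) + (m - a) * Real.exp (t * b)) / (b - a)
        ≤ ((b - b) * Real.exp (t * a) + (b - a) * Real.exp (t * b)) / (b - a) :=
          hmono m b hmb
      _ = Real.exp (t * b) := by field_simp; ring
      _ ≤ 1 := Real.exp_le_one_iff.2 (by nlinarith)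
      _ ≤ Real.exp (t ^ 2 * (b - a) ^ 2 / 8) := by
          rw [show (1:ℝ) = Real.exp 0 from (Real.exp_zero).symm]
          exact Real.exp_le_exp.2 (by positivity)
  · -- 0 ≤ b
    have ha0 : a ≤ 0 := le_trans ham hm
    set p : ℝ := -a / (b - a) with hpdef
    have hp0 : 0 ≤ p := by apply div_nonneg <;> linarith
    have hp1 : p ≤ 1 := by rw [div_le_one hba]; linarith
    set u : ℝ := t * (b - a) with hudef
    have hu : 0 ≤ u := by positivity
    have h := aux_phi p hp0 hp1 u hu
    have hGpos : 0 < 1 - p + p * Real.exp u := by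
      rcases eq_or_lt_of_le hp0 with hh | hh
      · simp [← hh]
      · nlinarith [mul_pos hh (Real.exp_pos u), Real.exp_pos u]
    have h2 : Real.exp (-(p * u)) * (1 - p + p * Real.exp u) ≤ Real.exp (u ^ 2 / 8) := by
      calc Real.exp (-(p * u)) * (1 - p + p * Real.exp u)
          = Real.exp (-(p * u) + Real.log (1 - p + p * Real.exp u)) := by
            rw [Real.exp_add, Real.exp_log hGpos]
        _ ≤ Real.exp (u ^ 2 / 8) := Real.exp_le_exp.2 h
    have hp1' : p * (b - a) = -a := by rw [hpdef]; exact div_mul_cancel₀ _ hba.ne'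
    have hpa : -(p * u) = t * a := by linear_combination (-t) * hp1' + (-p) * hudef
    have hpb : -(p * u) + u = t * b := by linear_combination (-t) * hp1' + (1 - p) * hudef
    have h3 : Real.exp (-(p * u)) * (1 - p + p * Real.exp u)
        = (1 - p) * Real.exp (t * a) + p * Real.exp (t * b) := by
      rw [show Real.exp (-(p*u)) * (1 - p + p * Real.exp u)
          = (1 - p) * Real.exp (-(p*u)) + p * (Real.exp (-(p*u)) * Real.exp u) by ring,
        ← Real.exp_add, hpb, hpa]
    have h4 : ((b - 0) * Real.exp (t * a) + (0 - a) * Real.exp (t * b)) / (b - a)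
        = (1 - p) * Real.exp (t * a) + p * Real.exp (t * b) := by
      rw [div_eq_iff hba.ne']
      linear_combination (Real.exp (t * a) - Real.exp (t * b)) * hp1'
    have h5 : u ^ 2 / 8 = t ^ 2 * (b - a) ^ 2 / 8 := by rw [hudef]; ring
    calc ((b - m) * Real.exp (t * a) + (m - a) * Real.exp (t * b)) / (b - a)
        ≤ ((b - 0) * Real.exp (t * a) + (0 - a) * Real.exp (t * b)) / (b - a) := hmono m 0 hm
      _ = (1 - p) * Real.exp (t * a) + p * Real.exp (t * b) := h4
      _ = Real.exp (-(p * u)) * (1 - p + p * Real.exp u) := h3.symm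
      _ ≤ Real.exp (u ^ 2 / 8) := h2
      _ = Real.exp (t ^ 2 * (b - a) ^ 2 / 8) := by rw [h5]

/-- Hoeffding's inequality for supermartingales: if X₁ is constant and the
increments satisfy X_{n+1} − X_n ∈ [a_{n+1}, b_{n+1}] a.s., then
P(X_n − X₁ ≥ λ) ≤ exp(−2λ² / ∑_{k=2}^n (b_k − a_k)²). -/
theorem stmt9
    {Ω : Type*} {mΩ : MeasurableSpace Ω} {μ : Measure Ω} [IsProbabilityMeasure μ]
    (𝒢 : Filtration ℕ mΩ) (X : ℕ → Ω → ℝ)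
    (hadapt : StronglyAdapted 𝒢 X)
    (hint : ∀ n, Integrable (X n) μ)
    (hsuper : ∀ n, 1 ≤ n → ∀ᵐ ω ∂μ, (μ[X (n + 1) | 𝒢 n]) ω ≤ X n ω)
    (a b : ℕ → ℝ) (hab : ∀ n, a n < b n)
    (hconst : ∃ c₀ : ℝ, ∀ ω, X 1 ω = c₀)
    (hinc : ∀ n, 1 ≤ n → ∀ᵐ ω ∂μ, X (n + 1) ω - X n ω ∈ Set.Icc (a (n + 1)) (b (n + 1))) :
    ∀ n, 1 ≤ n → ∀ lam : ℝ, 0 < lam →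
      (μ {ω | lam ≤ X n ω - X 1 ω}).toReal ≤
        Real.exp (-(2 * lam ^ 2) / ∑ k ∈ Finset.Icc 2 n, (b k - a k) ^ 2) := by
  obtain ⟨c₀, hc₀⟩ := hconst
  have hXsm : ∀ n, StronglyMeasurable (X n) := fun n => (hadapt n).mono (𝒢.le n)
  have claim : ∀ t : ℝ, 0 ≤ t → ∀ n, 1 ≤ n →
      (∀ᵐ ω ∂μ, X n ω - c₀ ≤ ∑ k ∈ Finset.Icc 2 n, b k) ∧
      Integrable (fun ω => Real.exp (t * (X n ω - c₀))) μ ∧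
      ∫ ω, Real.exp (t * (X n ω - c₀)) ∂μ ≤
        Real.exp (t ^ 2 * (∑ k ∈ Finset.Icc 2 n, (b k - a k) ^ 2) / 8) := by
    intro t ht
    refine Nat.le_induction ?_ ?_
    · -- base case n = 1
      have h1 : ∀ ω, X 1 ω - c₀ = 0 := fun ω => by rw [hc₀ ω]; ring
      refine ⟨Filter.Eventually.of_forall fun ω => ?_, ?_, ?_⟩
      · rw [h1 ω]; simp
      · simp only [h1, mul_zero, Real.exp_zero]; exact integrable_const 1
      · simp only [h1, mul_zero, Real.exp_zero]
        simp [measure_univ]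
    · -- inductive step
      rintro n hn ⟨hbnd, hfi, hIH⟩
      set a' : ℝ := a (n + 1) with ha'def
      set b' : ℝ := b (n + 1) with hb'def
      have hab' : a' < b' := hab (n + 1)
      have hba' : (0:ℝ) < b' - a' := by linarith
      set D : Ω → ℝ := fun ω => X (n + 1) ω - X n ω with hDdef
      have hD : ∀ᵐ ω ∂μ, D ω ∈ Set.Icc a' b' := hinc n hn
      have hDint : Integrable D μ := (hint (n + 1)).sub (hint n)
      set f : Ω → ℝ := fun ω => Real.exp (t * (X n ω - c₀)) with hfdef
      set g : Ω → ℝ := fun ω => Real.exp (t * D ω) with hgdef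
      have hfg_eq : ∀ ω, Real.exp (t * (X (n + 1) ω - c₀)) = f ω * g ω := by
        intro ω
        rw [hfdef, hgdef, ← Real.exp_add]
        congr 1; simp only [hDdef]; ring
      have hbnd' : ∀ᵐ ω ∂μ, X (n + 1) ω - c₀ ≤ ∑ k ∈ Finset.Icc 2 (n + 1), b k := by
        filter_upwards [hbnd, hD] with ω h1 h2
        rw [Finset.sum_Icc_succ_top (by omega : 2 ≤ n + 1)]
        have h3 := h2.2
        simp only [hDdef] at h3
        rw [← hb'def]
        linarith
      have hsm1 : StronglyMeasurable (fun ω => Real.exp (t * (X (n + 1) ω - c₀))) :=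
        Real.continuous_exp.comp_stronglyMeasurable
          (((hXsm (n + 1)).sub stronglyMeasurable_const).const_mul t)
      have hfgint : Integrable (fun ω => f ω * g ω) μ := by
        rw [show (fun ω => f ω * g ω) = fun ω => Real.exp (t * (X (n + 1) ω - c₀)) from
          funext fun ω => (hfg_eq ω).symm]
        refine Integrable.mono' (integrable_const
          (Real.exp (t * (∑ k ∈ Finset.Icc 2 (n + 1), b k)))) hsm1.aestronglyMeasurable ?_
        filter_upwards [hbnd'] with ω h
        rw [Real.norm_eq_abs, abs_of_pos (Real.exp_pos _)]
        exact Real.exp_le_exp.2 (mul_le_mul_of_nonneg_left h ht)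
      have hgint : Integrable g μ := by
        refine Integrable.mono' (integrable_const (Real.exp (t * b')))
          ((Real.continuous_exp.comp_stronglyMeasurable
            (((hXsm (n + 1)).sub (hXsm n)).const_mul t)).aestronglyMeasurable) ?_
        filter_upwards [hD] with ω h
        rw [Real.norm_eq_abs, abs_of_pos (Real.exp_pos _)]
        exact Real.exp_le_exp.2 (mul_le_mul_of_nonneg_left h.2 ht)
      have hfsm : StronglyMeasurable[𝒢 n] f :=
        Real.continuous_exp.comp_stronglyMeasurable
          (((hadapt n).sub stronglyMeasurable_const).const_mul t)
      haveI : SigmaFinite (μ.trim (𝒢.le n)) := by infer_instance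
      set K : ℝ := Real.exp (t ^ 2 * (b' - a') ^ 2 / 8) with hKdef
      set β : ℝ := (Real.exp (t * b') - Real.exp (t * a')) / (b' - a') with hβdef
      set α : ℝ := (b' * Real.exp (t * a') - a' * Real.exp (t * b')) / (b' - a') with hαdef
      have hl_eq : ∀ x : ℝ,
          ((b' - x) * Real.exp (t * a') + (x - a') * Real.exp (t * b')) / (b' - a')
            = α + β * x := by
        intro x
        rw [hαdef, hβdef]
        field_simp
        ring
      have hlint : Integrable (fun ω => α + β * D ω) μ := by
        simpa using (integrable_const α).add (hDint.const_mul β)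
      -- facts about m = μ[D | 𝒢 n]
      have hm_sub : μ[D|𝒢 n] =ᵐ[μ] fun ω => (μ[X (n+1)|𝒢 n]) ω - (μ[X n|𝒢 n]) ω := by
        have := condExp_sub (m := 𝒢 n) (hint (n + 1)) (hint n)
        filter_upwards [this] with ω h
        exact h
      have hXn_ce : μ[X n|𝒢 n] = X n :=
        condExp_of_stronglyMeasurable (𝒢.le n) (hadapt n) (hint n)
      have hm0 : ∀ᵐ ω ∂μ, (μ[D|𝒢 n]) ω ≤ 0 := by
        filter_upwards [hm_sub, hsuper n hn] with ω h1 h3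
        rw [hXn_ce] at h1
        rw [h1]; linarith
      have hma : ∀ᵐ ω ∂μ, a' ≤ (μ[D|𝒢 n]) ω := by
        have h := condExp_mono (m := 𝒢 n) (integrable_const a') hDint
          (Filter.Eventually.mono hD fun ω hω => hω.1)
        have hc : μ[(fun _ => a' : Ω → ℝ)|𝒢 n] = fun _ => a' := condExp_const (𝒢.le n) a'
        filter_upwards [h] with ω hω
        rwa [hc] at hω
      have hmb : ∀ᵐ ω ∂μ, (μ[D|𝒢 n]) ω ≤ b' := by
        have h := condExp_mono (m := 𝒢 n) hDint (integrable_const b')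
          (Filter.Eventually.mono hD fun ω hω => hω.2)
        have hc : μ[(fun _ => b' : Ω → ℝ)|𝒢 n] = fun _ => b' := condExp_const (𝒢.le n) b'
        filter_upwards [h] with ω hω
        rwa [hc] at hω
      -- conditional expectation of the linear bound
      have hlin_ce : μ[fun ω => α + β * D ω|𝒢 n] =ᵐ[μ] fun ω => α + β * (μ[D|𝒢 n]) ω := by
        have h1 := condExp_add (m := 𝒢 n) (integrable_const α) (hDint.const_mul β)
        have h2 := condExp_smul (m := 𝒢 n) (μ := μ) β D
        have hc : μ[(fun _ => α : Ω → ℝ)|𝒢 n] = fun _ => α := condExp_const (𝒢.le n) α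
        have h3 : (fun ω => α + β * D ω) = ((fun _ => α) + fun x => β * D x : Ω → ℝ) := rfl
        rw [h3]
        refine h1.trans ?_
        rw [hc]
        have h4 : (fun x => β * D x) = β • D := rfl
        rw [h4]
        filter_upwards [h2] with ω hω
        simp only [Pi.add_apply, Pi.smul_apply, smul_eq_mul] at hω ⊢
        rw [hω]
      -- chord bound a.e.
      have hgl : g ≤ᵐ[μ] fun ω => α + β * D ω := by
        filter_upwards [hD] with ω hω
        rw [← hl_eq (D ω)]
        exact chord_bound hab' hω.1 hω.2
      have hcondK : ∀ᵐ ω ∂μ, (μ[g|𝒢 n]) ω ≤ K := by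
        have h := condExp_mono (m := 𝒢 n) hgint hlint hgl
        filter_upwards [h, hlin_ce, hm0, hma, hmb] with ω h1 h2 h3 h4 h5
        calc (μ[g|𝒢 n]) ω ≤ (μ[fun ω => α + β * D ω|𝒢 n]) ω := h1
          _ = α + β * (μ[D|𝒢 n]) ω := h2
          _ = ((b' - (μ[D|𝒢 n]) ω) * Real.exp (t * a')
              + ((μ[D|𝒢 n]) ω - a') * Real.exp (t * b')) / (b' - a') := (hl_eq _).symm
          _ ≤ K := hoeff_scalar hab' ht h3 h4 h5
      -- pull-out and integral bounds
      have hpull : μ[f * g|𝒢 n] =ᵐ[μ] f * μ[g|𝒢 n] :=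
        condExp_mul_of_stronglyMeasurable_left hfsm (by simpa [Pi.mul_def] using hfgint) hgint
      have hfcond_int : Integrable (fun ω => f ω * (μ[g|𝒢 n]) ω) μ := by
        have := (integrable_condExp (m := 𝒢 n) (f := f * g) (μ := μ)).congr hpull
        simpa [Pi.mul_def] using this
      have hint_eq : ∫ ω, f ω * g ω ∂μ = ∫ ω, f ω * (μ[g|𝒢 n]) ω ∂μ := by
        have e1 : ∫ ω, (μ[f * g|𝒢 n]) ω ∂μ = ∫ ω, (f * g) ω ∂μ := integral_condExp (𝒢.le n)
        have e2 : ∫ ω, (μ[f * g|𝒢 n]) ω ∂μ = ∫ ω, f ω * (μ[g|𝒢 n]) ω ∂μ :=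
          integral_congr_ae (by filter_upwards [hpull] with ω h; simpa using h)
        calc ∫ ω, f ω * g ω ∂μ = ∫ ω, (f * g) ω ∂μ := rfl
          _ = ∫ ω, (μ[f * g|𝒢 n]) ω ∂μ := e1.symm
          _ = ∫ ω, f ω * (μ[g|𝒢 n]) ω ∂μ := e2
      refine ⟨hbnd', by
          rw [show (fun ω => Real.exp (t * (X (n+1) ω - c₀))) = fun ω => f ω * g ω from
            funext hfg_eq]
          exact hfgint, ?_⟩
      calc ∫ ω, Real.exp (t * (X (n + 1) ω - c₀)) ∂μ
          = ∫ ω, f ω * g ω ∂μ := by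
            exact integral_congr_ae (Filter.Eventually.of_forall fun ω => hfg_eq ω)
        _ = ∫ ω, f ω * (μ[g|𝒢 n]) ω ∂μ := hint_eq
        _ ≤ ∫ ω, f ω * K ∂μ := by
            refine integral_mono_ae hfcond_int (hfi.mul_const K) ?_
            filter_upwards [hcondK] with ω h
            exact mul_le_mul_of_nonneg_left h (Real.exp_pos _).le
        _ = (∫ ω, f ω ∂μ) * K := integral_mul_const K f
        _ ≤ Real.exp (t ^ 2 * (∑ k ∈ Finset.Icc 2 n, (b k - a k) ^ 2) / 8) * K := by
            exact mul_le_mul_of_nonneg_right hIH (Real.exp_pos _).le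
        _ = Real.exp (t ^ 2 * (∑ k ∈ Finset.Icc 2 (n + 1), (b k - a k) ^ 2) / 8) := by
            rw [hKdef, ← Real.exp_add, Finset.sum_Icc_succ_top (by omega : 2 ≤ n + 1),
              ← ha'def, ← hb'def]
            congr 1
            ring
  -- final Chernoff argument
  intro n hn lam hlam
  have hsetX : ∀ ω, X n ω - X 1 ω = X n ω - c₀ := fun ω => by rw [hc₀ ω]
  rcases eq_or_lt_of_le hn with h1 | h2
  · -- n = 1
    subst h1
    have : {ω | lam ≤ X 1 ω - X 1 ω} = (∅ : Set Ω) := by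
      ext ω; simp only [Set.mem_setOf_eq, Set.mem_empty_iff_false, iff_false, not_le]
      linarith
    rw [this]
    simp [(Real.exp_pos _).le]
  · -- 2 ≤ n
    have h2n : 2 ≤ n := h2
    set S : ℝ := ∑ k ∈ Finset.Icc 2 n, (b k - a k) ^ 2 with hSdef
    have hS : 0 < S := by
      refine Finset.sum_pos (fun k _ => ?_) ⟨2, by simp [Finset.mem_Icc]; omega⟩
      exact pow_pos (sub_pos.2 (hab k)) 2
    set t : ℝ := 4 * lam / S with htdef
    have ht : 0 < t := by positivity
    obtain ⟨-, hInt, hMgf⟩ := claim t ht.le n hn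
    have chern := measure_ge_le_exp_mul_mgf (μ := μ) (X := fun ω => X n ω - c₀) lam ht.le hInt
    have hset2 : {ω | lam ≤ X n ω - X 1 ω} = {ω | lam ≤ X n ω - c₀} := by
      ext ω; rw [Set.mem_setOf_eq, Set.mem_setOf_eq, hsetX ω]
    rw [hset2]
    refine le_trans chern ?_
    have hmgf : mgf (fun ω => X n ω - c₀) μ t = ∫ ω, Real.exp (t * (X n ω - c₀)) ∂μ := rfl
    calc Real.exp (-t * lam) * mgf (fun ω => X n ω - c₀) μ t
        ≤ Real.exp (-t * lam) * Real.exp (t ^ 2 * S / 8) := by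
          rw [hmgf]
          exact mul_le_mul_of_nonneg_left hMgf (Real.exp_pos _).le
      _ = Real.exp (-t * lam + t ^ 2 * S / 8) := (Real.exp_add _ _).symm
      _ = Real.exp (-(2 * lam ^ 2) / S) := by
          congr 1
          rw [htdef]
          field_simp
          ring
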